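/- Let S = (S_n) be a non-degenerate linear recurrence sequence of order r with minimal polynomial having r distinct roots α_1,…,α_r (all simple). If S is a divisibility sequence (S_0 = 0, S_1 = 1, S_n ∣ S_{mn} for all m,n ≥ 1), then for every n ≥ 0, S_n divides ∏_{1 ≤ i < j ≤ r} (α_j^n − α_i^n)/(α_j − α_i). -/

import Mathlib

open Polynomial Finset Matrix

/-- Any term of a linear recurrence sequence is the linear combination of the first `r`
terms with coefficients given by `X ^ m %ₘ f`, `f` the characteristic polynomial. -/
private lemma auxSrep {F : Type*} [Field F] {r : ℕ} (α : Fin r → F) (S : ℕ → F)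
    (hSrec : ∀ n : ℕ, ∑ i ∈ Finset.range (r + 1),
        (∏ l, (X - C (α l)) : F[X]).coeff i * S (n + i) = 0) (m : ℕ) :
    S m = ∑ k ∈ Finset.range r,
      ((X ^ m : F[X]) %ₘ ∏ l, (X - C (α l))).coeff k * S k := by
  set f : F[X] := ∏ l, (X - C (α l)) with hfdef
  have hf : f.Monic := monic_prod_of_monic _ _ fun l _ => monic_X_sub_C _
  have hfd : f.natDegree = r := by
    rw [hfdef, natDegree_prod _ _ fun l _ => X_sub_C_ne_zero _]
    simp
  induction m using Nat.strong_induction_on with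
  | _ m ih =>
  rcases lt_or_ge m r with hm | hm
  · rw [(modByMonic_eq_self_iff hf).mpr (by
      rw [degree_X_pow, degree_eq_natDegree hf.ne_zero, hfd]; exact_mod_cast hm)]
    rw [Finset.sum_eq_single m (fun k _ hk => by
        simp only [coeff_X_pow, ite_mul, one_mul, zero_mul, ite_eq_right_iff]
        exact fun h => absurd h hk)
      (fun h => absurd (Finset.mem_range.mpr hm) h)]
    simp [coeff_X_pow]
  · have hcr : f.coeff r = 1 := by rw [← hfd]; exact hf.coeff_natDegree
    have hXm : (X ^ m : F[X]) = X ^ (m - r) * f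
        - ∑ i ∈ Finset.range r, C (f.coeff i) * X ^ (m - r + i) := by
      have h1 : (X ^ (m - r) : F[X]) * f
          = ∑ i ∈ Finset.range (r + 1), C (f.coeff i) * X ^ (m - r + i) := by
        conv_lhs => rw [f.as_sum_range_C_mul_X_pow, hfd]
        rw [Finset.mul_sum]
        exact Finset.sum_congr rfl fun i _ => by rw [pow_add]; ring
      rw [h1, Finset.sum_range_succ, hcr, C_1, one_mul, Nat.sub_add_cancel hm]
      ring
    have hsum : ∀ s : Finset ℕ, (∑ i ∈ s, C (f.coeff i) * X ^ (m - r + i)) %ₘ f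
        = ∑ i ∈ s, C (f.coeff i) * ((X ^ (m - r + i) : F[X]) %ₘ f) := by
      intro s
      induction s using Finset.induction_on with
      | empty => simp
      | @insert a s hns ih2 =>
          rw [Finset.sum_insert hns, Finset.sum_insert hns, add_modByMonic, ih2]
          congr 1
          rw [← smul_eq_C_mul, ← smul_eq_C_mul, smul_modByMonic]
    have hmod : (X ^ m : F[X]) %ₘ f
        = -∑ i ∈ Finset.range r, C (f.coeff i) * ((X ^ (m - r + i) : F[X]) %ₘ f) := by
      rw [hXm, sub_modByMonic, mul_self_modByMonic hf, hsum, zero_sub]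
    have expand : ∑ k ∈ Finset.range r, ((X ^ m : F[X]) %ₘ f).coeff k * S k
        = -∑ i ∈ Finset.range r, f.coeff i * S (m - r + i) := by
      rw [hmod]
      simp only [coeff_neg, finset_sum_coeff, coeff_C_mul, neg_mul, Finset.sum_mul,
        Finset.sum_neg_distrib, mul_assoc]
      rw [Finset.sum_comm]
      congr 1
      refine Finset.sum_congr rfl fun i hi => ?_
      rw [← Finset.mul_sum, ← ih (m - r + i) (by simp only [Finset.mem_range] at hi; omega)]
    have h := hSrec (m - r)
    rw [Finset.sum_range_succ, hcr, one_mul, Nat.sub_add_cancel hm] at h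
    rw [expand]
    linear_combination h

/-- Simple-roots case of the Bézivin–Pethő–van der Poorten theorem: a
non-degenerate divisibility sequence of order `r` whose characteristic polynomial
`∏ (x - α_i)` has `r` distinct (simple) roots divides
`∏_{i<j} (α_j^n - α_i^n)/(α_j - α_i)`, divisibility in the ring generated by the `S_n`
and the roots `α_i`. -/
theorem divisibility_sequence_divides_resultant_simple_roots
    {F : Type*} [Field F] [CharZero F]
    (r : ℕ) (α : Fin r → F) (hα0 : ∀ l, α l ≠ 0) (hinj : Function.Injective α)
    (hnd : ∀ i j : Fin r, i ≠ j → ∀ k : ℕ, 1 ≤ k → (α i / α j) ^ k ≠ 1)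
    (S : ℕ → F)
    (hSrec : ∀ n : ℕ,
      ∑ i ∈ Finset.range (r + 1),
        (∏ l, (Polynomial.X - Polynomial.C (α l)) : Polynomial F).coeff i * S (n + i) = 0)
    (hS0 : S 0 = 0) (hS1 : S 1 = 1)
    (hdiv : ∀ n, 1 ≤ n → ∀ k, 1 ≤ k →
      ∃ t ∈ Subring.closure (Set.range S ∪ Set.range α), S (k * n) = S n * t) :
    ∀ n : ℕ,
      ∃ t ∈ Subring.closure (Set.range S ∪ Set.range α),
        (∏ i : Fin r, ∏ j ∈ Finset.Ioi i, (α j ^ n - α i ^ n) / (α j - α i)) = S n * t := by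
  intro n
  set R0 := Subring.closure (Set.range S ∪ Set.range α) with hR0
  set f : F[X] := ∏ l, (X - C (α l)) with hfdef
  have hf : f.Monic := monic_prod_of_monic _ _ fun l _ => monic_X_sub_C _
  have hfd : f.natDegree = r := by
    rw [hfdef, natDegree_prod _ _ fun l _ => X_sub_C_ne_zero _]
    simp
  have hrep := auxSrep α S hSrec
  -- the order is at least 2
  have hr2 : 2 ≤ r := by
    by_contra hlt
    push_neg at hlt
    have h1 := hrep 1
    have hcase : r = 0 ∨ r = 1 := by omega
    rcases hcase with rfl | rfl
    · simp only [Finset.range_zero, Finset.sum_empty] at h1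
      exact one_ne_zero (hS1 ▸ h1)
    · rw [Finset.sum_range_one, hS0, mul_zero] at h1
      exact one_ne_zero (hS1 ▸ h1)
  have hr1 : 1 < r := hr2
  have hr0 : 0 < r := by omega
  -- data in the subring
  have hsmem : ∀ k, S k ∈ R0 := fun k => Subring.subset_closure (Or.inl ⟨k, rfl⟩)
  have hamem : ∀ l, α l ∈ R0 := fun l => Subring.subset_closure (Or.inr ⟨l, rfl⟩)
  set S' : ℕ → R0 := fun k => ⟨S k, hsmem k⟩ with hS'
  set α' : Fin r → R0 := fun l => ⟨α l, hamem l⟩ with hα'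
  set ι : R0 →+* F := R0.subtype with hι
  set f' : R0[X] := ∏ l, (X - C (α' l)) with hf'def
  have hf' : f'.Monic := monic_prod_of_monic _ _ fun l _ => monic_X_sub_C _
  have hmapf : f'.map ι = f := by
    rw [hf'def, Polynomial.map_prod, hfdef]
    refine Finset.prod_congr rfl fun l _ => ?_
    simp [hι, hα']
  set E' : Matrix (Fin r) (Fin r) R0 :=
    Matrix.of (fun i k : Fin r => ((X ^ (n * (i : ℕ)) : R0[X]) %ₘ f').coeff k) with hE'def
  have hE : ∀ i k : Fin r, ι (E' i k) = ((X ^ (n * (i : ℕ)) : F[X]) %ₘ f).coeff (k : ℕ) := by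
    intro i k
    calc ι (E' i k) = (((X ^ (n * (i : ℕ)) : R0[X]) %ₘ f').map ι).coeff (k : ℕ) := by
          rw [Polynomial.coeff_map]; rfl
      _ = ((X ^ (n * (i : ℕ)) : F[X]) %ₘ f).coeff (k : ℕ) := by
          rw [map_modByMonic ι hf', Polynomial.map_pow, Polynomial.map_X, hmapf]
  -- evaluation of mod at roots
  have hroot : ∀ l : Fin r, f.eval (α l) = 0 := by
    intro l
    rw [hfdef, eval_prod]
    exact Finset.prod_eq_zero (Finset.mem_univ l) (by simp)
  have heval : ∀ (m : ℕ) (l : Fin r),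
      ∑ k ∈ Finset.range r, ((X ^ m : F[X]) %ₘ f).coeff k * α l ^ k = α l ^ m := by
    intro m l
    have hdeg : ((X ^ m : F[X]) %ₘ f).natDegree < r := by
      rcases eq_or_ne ((X ^ m : F[X]) %ₘ f) 0 with h | h
      · rw [h]; simpa using hr0
      · have hd := degree_modByMonic_lt (X ^ m : F[X]) hf
        rw [degree_eq_natDegree hf.ne_zero, hfd] at hd
        exact (natDegree_lt_iff_degree_lt h).mpr hd
    have h2 : ((X ^ m : F[X]) %ₘ f).eval (α l) = α l ^ m := by
      conv_rhs => rw [show α l ^ m = (X ^ m : F[X]).eval (α l) by simp]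
      conv_rhs => rw [← modByMonic_add_div (X ^ m : F[X]) f]
      rw [eval_add, eval_mul, hroot, zero_mul, add_zero]
    rw [← h2, eval_eq_sum_range' hdeg]
  -- the matrix identity : E' * V = V_n
  have hmul : (E'.map ι) * (Matrix.vandermonde α)ᵀ
      = (Matrix.vandermonde fun l => α l ^ n)ᵀ := by
    ext i l
    rw [Matrix.mul_apply]
    simp only [Matrix.map_apply, Matrix.transpose_apply, Matrix.vandermonde_apply]
    calc ∑ k : Fin r, ι (E' i k) * α l ^ (k : ℕ)
        = ∑ k ∈ Finset.range r, ((X ^ (n * (i : ℕ)) : F[X]) %ₘ f).coeff k * α l ^ k := by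
          rw [← Fin.sum_univ_eq_sum_range fun k => ((X ^ (n * (i : ℕ)) : F[X]) %ₘ f).coeff k * α l ^ k]
          exact Finset.sum_congr rfl fun k _ => by rw [hE]
      _ = α l ^ (n * (i : ℕ)) := heval _ l
      _ = (α l ^ n) ^ (i : ℕ) := by rw [pow_mul]
  have hdetE : (E'.map ι).det * ∏ i : Fin r, ∏ j ∈ Finset.Ioi i, (α j - α i)
      = ∏ i : Fin r, ∏ j ∈ Finset.Ioi i, (α j ^ n - α i ^ n) := by
    have h := congrArg Matrix.det hmul
    rwa [Matrix.det_mul, Matrix.det_transpose, Matrix.det_transpose,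
      Matrix.det_vandermonde, Matrix.det_vandermonde] at h
  have hvand_ne : (∏ i : Fin r, ∏ j ∈ Finset.Ioi i, (α j - α i)) ≠ 0 := by
    refine Finset.prod_ne_zero_iff.mpr fun i _ => Finset.prod_ne_zero_iff.mpr fun j hj => ?_
    refine sub_ne_zero.mpr fun hji => ?_
    have : j = i := hinj hji
    exact absurd this (ne_of_gt (Finset.mem_Ioi.mp hj))
  have htarget : (∏ i : Fin r, ∏ j ∈ Finset.Ioi i, (α j ^ n - α i ^ n) / (α j - α i))
      = (E'.map ι).det := by
    have hsplit : ∏ i : Fin r, ∏ j ∈ Finset.Ioi i, (α j ^ n - α i ^ n) / (α j - α i)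
        = (∏ i : Fin r, ∏ j ∈ Finset.Ioi i, (α j ^ n - α i ^ n))
          / ∏ i : Fin r, ∏ j ∈ Finset.Ioi i, (α j - α i) := by
      rw [← Finset.prod_div_distrib]
      exact Finset.prod_congr rfl fun i _ => Finset.prod_div_distrib _ _
    rw [hsplit, ← hdetE, mul_div_cancel_right₀ _ hvand_ne]
  -- divisibility of the column S (n * i) by S n inside R0
  have hcol : ∀ i : Fin r, ∃ v : R0, S' (n * (i : ℕ)) = S' n * v := by
    intro i
    rcases Nat.eq_zero_or_pos n with rfl | hn
    · exact ⟨1, by apply Subtype.ext; simp [hS']⟩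
    rcases Nat.eq_zero_or_pos (i : ℕ) with hi | hi
    · refine ⟨0, ?_⟩
      apply Subtype.ext
      simp [hS', hi, hS0]
    · obtain ⟨t, ht, hts⟩ := hdiv n hn i hi
      refine ⟨⟨t, ht⟩, ?_⟩
      apply Subtype.ext
      simpa [hS', Nat.mul_comm] using hts
  choose u hu using hcol
  -- E' applied to the vector (S 0, ..., S (r-1)) gives (S 0, S n, S (2n), ...)
  have hEv : ∀ i : Fin r, (∑ k : Fin r, S' (k : ℕ) • E' i k) = S' (n * (i : ℕ)) := by
    intro i
    apply Subtype.ext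
    have hval : ((∑ k : Fin r, S' (k : ℕ) • E' i k : R0) : F)
        = ∑ k : Fin r, S k * ι (E' i k) := by
      push_cast
      rfl
    rw [hval]
    have : ∑ k : Fin r, S k * ι (E' i k)
        = ∑ k ∈ Finset.range r, ((X ^ (n * (i : ℕ)) : F[X]) %ₘ f).coeff k * S k := by
      rw [← Fin.sum_univ_eq_sum_range fun k => ((X ^ (n * (i : ℕ)) : F[X]) %ₘ f).coeff k * S k]
      exact Finset.sum_congr rfl fun k _ => by rw [hE, mul_comm]
    rw [this, ← hrep (n * (i : ℕ))]
  set j1 : Fin r := ⟨1, hr1⟩ with hj1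
  have hdet1 : (E'.updateCol j1 fun k => ∑ i : Fin r, S' (i : ℕ) • E' k i).det = E'.det := by
    rw [Matrix.det_updateCol_sum]
    have h1 : S' ((j1 : Fin r) : ℕ) = 1 := by
      apply Subtype.ext
      simp [hS', hj1, hS1]
    rw [h1, one_smul]
  have hcols : (fun k => ∑ i : Fin r, S' (i : ℕ) • E' k i) = S' n • u := by
    funext k
    rw [hEv k, hu k]
    rfl
  have key : E'.det = S' n * (E'.updateCol j1 u).det := by
    rw [← hdet1, hcols, Matrix.det_updateCol_smul]
  refine ⟨ι ((E'.updateCol j1 u).det), SetLike.coe_mem _, ?_⟩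
  have hmapdet : (E'.map (⇑ι)).det = ι E'.det := by
    rw [RingHom.map_det, RingHom.mapMatrix_apply]
  rw [htarget, hmapdet, key, _root_.map_mul]
  rfl
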